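/- arXiv:2402.05287 — 2 statements merged into one kernel-verified Lean document; each statement's English description precedes it below -/
import Mathlib

section
/- Suppose the conservative three-wave system with Jⱼ = i cⱼ, cⱼ ∈ ℝ \ {0}, satisfies c₀·c₂ > 0. Then the energies E₀(t) and E₂(t) are uniformly bounded in time: for all t, E₀(t) ≤ |c₀| · (E₀(0)/|c₀| + E₂(0)/|c₂|) and similarly for E₂. -/
lemma helper_bound (x y x0 y0 p q : ℝ) (hp : 0 < p) (hq : 0 < q) (hy : 0 ≤ y)
    (hcons : q * x + p * y = q * x0 + p * y0) :
    x ≤ p * (x0 / p + y0 / q) := by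
  rw [div_add_div _ _ hp.ne' hq.ne', ← mul_div_assoc, le_div_iff₀ (by positivity)]
  nlinarith [mul_nonneg hp.le (mul_nonneg hp.le hy)]

/-- If `c₀ c₂ > 0` in the conservative three-wave system, the energies
`E₀` and `E₂` are uniformly bounded in terms of the initial data. -/
theorem stmt_3 (A0 A1 A2 : ℝ → ℂ) (c0 c1 c2 : ℝ)
    (hA0 : Differentiable ℝ A0) (hA1 : Differentiable ℝ A1)
    (hA2 : Differentiable ℝ A2)
    (hc0 : c0 ≠ 0) (hc1 : c1 ≠ 0) (hc2 : c2 ≠ 0)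
    (hsign : 0 < c0 * c2)
    (hode0 : ∀ t, deriv A0 t = (Complex.I * c0) * (starRingEnd ℂ) (A1 t) * A2 t)
    (hode1 : ∀ t, deriv A1 t = (Complex.I * c1) * (starRingEnd ℂ) (A0 t) * A2 t)
    (hode2 : ∀ t, deriv A2 t = (Complex.I * c2) * A0 t * A1 t) :
    ∀ t : ℝ,
      (‖A0 t‖)^2
        ≤ |c0| * ((‖A0 0‖)^2 / |c0| + (‖A2 0‖)^2 / |c2|)
      ∧ (‖A2 t‖)^2
        ≤ |c2| * ((‖A0 0‖)^2 / |c0| + (‖A2 0‖)^2 / |c2|) := by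
  set F : ℝ → ℝ := fun t => c2 * Complex.normSq (A0 t) + c0 * Complex.normSq (A2 t) with hFdef
  have hFd : ∀ t, HasDerivAt F 0 t := by
    intro t
    have h0 := (hA0 t).hasDerivAt
    have h2 := (hA2 t).hasDerivAt
    have h0re : HasDerivAt (fun s => (A0 s).re) ((deriv A0 t).re) t :=
      Complex.reCLM.hasFDerivAt.comp_hasDerivAt t h0
    have h0im : HasDerivAt (fun s => (A0 s).im) ((deriv A0 t).im) t :=
      Complex.imCLM.hasFDerivAt.comp_hasDerivAt t h0
    have h2re : HasDerivAt (fun s => (A2 s).re) ((deriv A2 t).re) t :=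
      Complex.reCLM.hasFDerivAt.comp_hasDerivAt t h2
    have h2im : HasDerivAt (fun s => (A2 s).im) ((deriv A2 t).im) t :=
      Complex.imCLM.hasFDerivAt.comp_hasDerivAt t h2
    have hN0 : HasDerivAt (fun s => Complex.normSq (A0 s))
        ((deriv A0 t).re * (A0 t).re + (A0 t).re * (deriv A0 t).re +
          ((deriv A0 t).im * (A0 t).im + (A0 t).im * (deriv A0 t).im)) t := by
      have := (h0re.mul h0re).add (h0im.mul h0im)
      simpa [Complex.normSq_apply, Pi.mul_def, Pi.add_def] using this
    have hN2 : HasDerivAt (fun s => Complex.normSq (A2 s))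
        ((deriv A2 t).re * (A2 t).re + (A2 t).re * (deriv A2 t).re +
          ((deriv A2 t).im * (A2 t).im + (A2 t).im * (deriv A2 t).im)) t := by
      have := (h2re.mul h2re).add (h2im.mul h2im)
      simpa [Complex.normSq_apply, Pi.mul_def, Pi.add_def] using this
    have hsum := (hN0.const_mul c2).add (hN2.const_mul c0)
    have : HasDerivAt F _ t := hsum
    convert this using 1
    rw [hode0 t, hode2 t]
    simp only [Complex.mul_re, Complex.mul_im, Complex.I_re, Complex.I_im,
      Complex.ofReal_re, Complex.ofReal_im, Complex.conj_re, Complex.conj_im]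
    ring
  have hconst : ∀ t, F t = F 0 := fun t =>
    is_const_of_deriv_eq_zero (fun s => (hFd s).differentiableAt)
      (fun s => (hFd s).deriv) t 0
  intro t
  have hc := hconst t
  simp only [hFdef] at hc
  have hnn0 : (0:ℝ) ≤ Complex.normSq (A0 t) := Complex.normSq_nonneg _
  have hnn2 : (0:ℝ) ≤ Complex.normSq (A2 t) := Complex.normSq_nonneg _
  simp only [Complex.sq_norm]
  rcases mul_pos_iff.mp hsign with ⟨h0, h2⟩ | ⟨h0, h2⟩
  · rw [abs_of_pos h0, abs_of_pos h2]
    constructor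
    · exact helper_bound _ (Complex.normSq (A2 t)) _ _ _ _ h0 h2 hnn2 hc
    · rw [add_comm]
      exact helper_bound _ (Complex.normSq (A0 t)) _ _ _ _ h2 h0 hnn0 (by linarith)
  · rw [abs_of_neg h0, abs_of_neg h2]
    constructor
    · exact helper_bound _ (Complex.normSq (A2 t)) _ _ _ _ (by linarith) (by linarith)
        hnn2 (by linarith)
    · rw [add_comm]
      exact helper_bound _ (Complex.normSq (A0 t)) _ _ _ _ (by linarith) (by linarith)
        hnn0 (by linarith)
end

section
/- If in the conservative three-wave system all three real coefficients c₀, c₁, c₂ (with Jⱼ = i cⱼ) have the same sign, then all three wave energies E₀, E₁, E₂ are bounded for all time by constants depending only on the initial data. -/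
private lemma const_of_hasDerivAt_zero (F : ℝ → ℂ) (h : ∀ t, HasDerivAt F 0 t) (t : ℝ) :
    F t = F 0 :=
  is_const_of_deriv_eq_zero (fun x => (h x).differentiableAt) (fun x => (h x).deriv) t 0

private lemma bound_aux (x y K a b : ℝ) (ha : a ≠ 0) (hab : 0 < a / b) (hy : 0 ≤ y)
    (h : x / a + y / b = K) : x ≤ a * K := by
  have hb : b ≠ 0 := by
    rintro rfl; simp at hab
  have hx : x = a * K - (a / b) * y := by
    field_simp at h ⊢
    nlinarith [h]
  nlinarith [mul_nonneg hab.le hy]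

/-- If all three coefficients `c₀, c₁, c₂` have the same sign, then all three
wave energies are bounded for all time by constants depending only on the
initial data. -/
theorem stmt_4 (A0 A1 A2 : ℝ → ℂ) (c0 c1 c2 : ℝ)
    (hA0 : Differentiable ℝ A0) (hA1 : Differentiable ℝ A1)
    (hA2 : Differentiable ℝ A2)
    (hc0 : c0 ≠ 0) (hc1 : c1 ≠ 0) (hc2 : c2 ≠ 0)
    (hsign01 : 0 < c0 * c1) (hsign02 : 0 < c0 * c2)
    (hode0 : ∀ t, deriv A0 t = (Complex.I * c0) * (starRingEnd ℂ) (A1 t) * A2 t)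
    (hode1 : ∀ t, deriv A1 t = (Complex.I * c1) * (starRingEnd ℂ) (A0 t) * A2 t)
    (hode2 : ∀ t, deriv A2 t = (Complex.I * c2) * A0 t * A1 t) :
    ∃ M0 M1 M2 : ℝ, ∀ t : ℝ,
      ‖A0 t‖^2 ≤ M0
      ∧ ‖A1 t‖^2 ≤ M1
      ∧ ‖A2 t‖^2 ≤ M2 := by
  have hc0sq : 0 < c0 ^ 2 := by positivity
  have hsign12 : 0 < c1 * c2 := by nlinarith [mul_pos hsign01 hsign02]
  have hconj : ∀ (B : ℝ → ℂ), Differentiable ℝ B → ∀ t,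
      HasDerivAt (fun s => (starRingEnd ℂ) (B s)) ((starRingEnd ℂ) (deriv B t)) t := by
    intro B hB t
    exact (hB t).hasDerivAt.star
  -- first invariant
  have h02 : ∀ t, Complex.normSq (A0 t) / c0 + Complex.normSq (A2 t) / c2
      = Complex.normSq (A0 0) / c0 + Complex.normSq (A2 0) / c2 := by
    intro t
    have hF : ∀ s, HasDerivAt
        (fun s => A0 s * (starRingEnd ℂ) (A0 s) / (c0:ℂ) + A2 s * (starRingEnd ℂ) (A2 s) / (c2:ℂ)) 0 s := by
      intro s
      have h0 := (hA0 s).hasDerivAt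
      have h2 := (hA2 s).hasDerivAt
      have H := (((h0.mul (hconj A0 hA0 s)).div_const (c0:ℂ)).add
        ((h2.mul (hconj A2 hA2 s)).div_const (c2:ℂ)))
      refine H.congr_deriv (Eq.symm ?_)
      rw [hode0 s, hode2 s]
      simp only [map_mul, Complex.conj_I, Complex.conj_conj, Complex.conj_ofReal]
      have hc0' : (c0:ℂ) ≠ 0 := Complex.ofReal_ne_zero.mpr hc0
      have hc2' : (c2:ℂ) ≠ 0 := Complex.ofReal_ne_zero.mpr hc2
      field_simp
      ring
    have := const_of_hasDerivAt_zero _ hF t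
    rw [Complex.mul_conj, Complex.mul_conj, Complex.mul_conj, Complex.mul_conj] at this
    exact_mod_cast this
  -- second invariant
  have h12 : ∀ t, Complex.normSq (A1 t) / c1 + Complex.normSq (A2 t) / c2
      = Complex.normSq (A1 0) / c1 + Complex.normSq (A2 0) / c2 := by
    intro t
    have hF : ∀ s, HasDerivAt
        (fun s => A1 s * (starRingEnd ℂ) (A1 s) / (c1:ℂ) + A2 s * (starRingEnd ℂ) (A2 s) / (c2:ℂ)) 0 s := by
      intro s
      have h1 := (hA1 s).hasDerivAt
      have h2 := (hA2 s).hasDerivAt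
      have H := (((h1.mul (hconj A1 hA1 s)).div_const (c1:ℂ)).add
        ((h2.mul (hconj A2 hA2 s)).div_const (c2:ℂ)))
      refine H.congr_deriv (Eq.symm ?_)
      rw [hode1 s, hode2 s]
      simp only [map_mul, Complex.conj_I, Complex.conj_conj, Complex.conj_ofReal]
      have hc1' : (c1:ℂ) ≠ 0 := Complex.ofReal_ne_zero.mpr hc1
      have hc2' : (c2:ℂ) ≠ 0 := Complex.ofReal_ne_zero.mpr hc2
      field_simp
      ring
    have := const_of_hasDerivAt_zero _ hF t
    rw [Complex.mul_conj, Complex.mul_conj, Complex.mul_conj, Complex.mul_conj] at this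
    exact_mod_cast this
  -- sign facts
  have r02 : 0 < c0 / c2 := by
    rcases mul_pos_iff.mp hsign02 with ⟨h, h'⟩ | ⟨h, h'⟩
    · exact div_pos h h'
    · exact div_pos_of_neg_of_neg h h'
  have r20 : 0 < c2 / c0 := by
    rcases mul_pos_iff.mp hsign02 with ⟨h, h'⟩ | ⟨h, h'⟩
    · exact div_pos h' h
    · exact div_pos_of_neg_of_neg h' h
  have r12 : 0 < c1 / c2 := by
    rcases mul_pos_iff.mp hsign12 with ⟨h, h'⟩ | ⟨h, h'⟩
    · exact div_pos h h'
    · exact div_pos_of_neg_of_neg h h'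
  refine ⟨c0 * (Complex.normSq (A0 0) / c0 + Complex.normSq (A2 0) / c2),
    c1 * (Complex.normSq (A1 0) / c1 + Complex.normSq (A2 0) / c2),
    c2 * (Complex.normSq (A0 0) / c0 + Complex.normSq (A2 0) / c2), fun t => ?_⟩
  rw [Complex.sq_norm, Complex.sq_norm, Complex.sq_norm]
  have h02' : Complex.normSq (A2 t) / c2 + Complex.normSq (A0 t) / c0
      = Complex.normSq (A0 0) / c0 + Complex.normSq (A2 0) / c2 := by
    rw [add_comm]; exact h02 t
  exact ⟨bound_aux (Complex.normSq (A0 t)) (Complex.normSq (A2 t)) _ c0 c2 hc0 r02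
      (Complex.normSq_nonneg _) (h02 t),
    bound_aux (Complex.normSq (A1 t)) (Complex.normSq (A2 t)) _ c1 c2 hc1 r12
      (Complex.normSq_nonneg _) (h12 t),
    bound_aux (Complex.normSq (A2 t)) (Complex.normSq (A0 t)) _ c2 c0 hc2 r20
      (Complex.normSq_nonneg _) h02'⟩
end
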